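/- Let X > 1, λ > 0, H ≤ X^{1/(6(1+2λ))}, x ∈ [X, 2X], and y = 2√x·H + H². Then the number of pairs (a, b) of positive integers with b squarefree, b > X^{1/3}/H^λ, and x < a²b³ ≤ x + y is at most 2H^{3λ/2}. -/

import Mathlib

open Classical

private lemma aux_h2v (v : ℝ) (hv0 : 0 < v) (hv3 : v^3 = 5) :
    2 + Real.sqrt 2 ≤ 2 * v := by
  have hs2 : (Real.sqrt 2)^2 = 2 := Real.sq_sqrt (by norm_num)
  have hs0 : 0 ≤ Real.sqrt 2 := Real.sqrt_nonneg 2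
  have hs107 : Real.sqrt 2 ≤ 10/7 := by nlinarith [hs2, hs0]
  nlinarith [sq_nonneg (2 + Real.sqrt 2 - 2*v), sq_nonneg v, hv3, hv0, hs2, hs107]

private lemma aux_final (n t v : ℝ) (ht1 : 1 ≤ t) (hv0 : 0 < v) (hv3 : v^3 = 5)
    (hn2 : 2 ≤ n) (hnA : n ≤ Real.sqrt 2 * t + 1/v) : n ≤ 2 * t := by
  have hs2 : (Real.sqrt 2)^2 = 2 := Real.sq_sqrt (by norm_num)
  have hs0 : 0 ≤ Real.sqrt 2 := Real.sqrt_nonneg 2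
  have hs1 : 1 ≤ Real.sqrt 2 := by nlinarith [hs2, hs0]
  have h2v : 2 + Real.sqrt 2 ≤ 2 * v := aux_h2v v hv0 hv3
  have hstep : Real.sqrt 2 / v ≤ n * (Real.sqrt 2 - 1) := by
    rw [div_le_iff₀ hv0]
    have k1 : (0:ℝ) ≤ (n - 2) * (Real.sqrt 2 - 1) * v :=
      mul_nonneg (mul_nonneg (by linarith) (by linarith)) hv0.le
    have k2 : (0:ℝ) ≤ (2*v - (2+Real.sqrt 2)) * (Real.sqrt 2 - 1) :=
      mul_nonneg (by linarith) (by linarith)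
    nlinarith [k1, k2, hs2]
  have hfin : Real.sqrt 2 * n ≤ 2 * t + Real.sqrt 2 / v := by
    have e : Real.sqrt 2 * (Real.sqrt 2 * t + 1/v) = 2*t + Real.sqrt 2/v := by
      linear_combination t * hs2
    have h := mul_le_mul_of_nonneg_left hnA hs0
    rw [e] at h
    exact h
  linarith

set_option maxHeartbeats 1000000 in
/-- The number of pairs `(a, b)` of positive integers with `b` squarefree,
`b > X^{1/3}/H^λ`, and `x < a² b³ ≤ x + y` is at most `2 H^{3λ/2}`. -/
theorem large_b_count (X lam H x : ℝ)
    (hX : 1 < X) (hlam : 0 < lam) (hH : 1 ≤ H)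
    (hHX : H ≤ X ^ (1 / (6 * (1 + 2 * lam))))
    (hx : x ∈ Set.Icc X (2 * X)) :
    (((Finset.Icc 1 ⌊x + (2 * Real.sqrt x * H + H ^ 2)⌋₊ ×ˢ
        Finset.Icc 1 ⌊x + (2 * Real.sqrt x * H + H ^ 2)⌋₊).filter
      (fun p : ℕ × ℕ => Squarefree p.2 ∧ X ^ ((1 : ℝ) / 3) / H ^ lam < (p.2 : ℝ) ∧
        x < ((p.1 ^ 2 * p.2 ^ 3 : ℕ) : ℝ) ∧
        ((p.1 ^ 2 * p.2 ^ 3 : ℕ) : ℝ) ≤ x + (2 * Real.sqrt x * H + H ^ 2))).card : ℝ) ≤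
      2 * H ^ (3 * lam / 2) := by
  obtain ⟨hxX, hx2X⟩ := hx
  have hX0 : (0:ℝ) < X := by linarith
  have hX1 : (1:ℝ) ≤ X := hX.le
  have hx1 : (1:ℝ) < x := lt_of_lt_of_le hX hxX
  have hx0 : (0:ℝ) < x := by linarith
  have hH0 : (0:ℝ) < H := by linarith
  have hsx0 : 0 < Real.sqrt x := Real.sqrt_pos.mpr hx0
  set y : ℝ := 2 * Real.sqrt x * H + H ^ 2 with hydef
  set S : Finset (ℕ × ℕ) :=
    ((Finset.Icc 1 ⌊x + y⌋₊ ×ˢ Finset.Icc 1 ⌊x + y⌋₊).filter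
      (fun p : ℕ × ℕ => Squarefree p.2 ∧ X ^ ((1 : ℝ) / 3) / H ^ lam < (p.2 : ℝ) ∧
        x < ((p.1 ^ 2 * p.2 ^ 3 : ℕ) : ℝ) ∧
        ((p.1 ^ 2 * p.2 ^ 3 : ℕ) : ℝ) ≤ x + y)) with hS
  set t : ℝ := H ^ (3 * lam / 2) with ht
  clear_value y S t
  have ht1 : 1 ≤ t := by
    rw [ht]
    have := Real.rpow_le_rpow_of_exponent_le hH (show (0:ℝ) ≤ 3 * lam / 2 by positivity)
    rwa [Real.rpow_zero] at this
  have ht0 : 0 < t := by linarith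
  have hxy : x + y = (Real.sqrt x + H)^2 := by
    rw [hydef]; linear_combination -Real.sq_sqrt hx0.le
  have he0 : 0 < 6 * (1 + 2*lam) := by linarith
  -- generic rpow bound
  have hrpow_aux : ∀ c d : ℝ, 0 ≤ c → (1 / (6 * (1 + 2 * lam))) * c ≤ d →
      H ^ c ≤ X ^ d := by
    intro c d hc hcd
    have h1 : H ^ c ≤ (X ^ (1 / (6 * (1 + 2 * lam)))) ^ c :=
      Real.rpow_le_rpow hH0.le hHX hc
    rw [← Real.rpow_mul hX0.le] at h1
    exact h1.trans (Real.rpow_le_rpow_of_exponent_le hX1 hcd)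
  have hHX16 : H ≤ X ^ ((1:ℝ)/6) := by
    have h := hrpow_aux 1 (1/6) zero_le_one (by
      rw [mul_one, div_le_div_iff₀ he0 (by norm_num : (0:ℝ) < 6)]; nlinarith)
    rwa [Real.rpow_one] at h
  have hH23X : H ^ ((2:ℝ)+3*lam) ≤ X := by
    have h := hrpow_aux (2+3*lam) 1 (by linarith) (by
      rw [div_mul_eq_mul_div, div_le_one he0]; nlinarith)
    rwa [Real.rpow_one] at h
  have hH136 : H ^ ((1:ℝ)+3*lam/2) ≤ X ^ ((1:ℝ)/6) := by
    refine hrpow_aux _ _ (by linarith) ?_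
    rw [div_mul_eq_mul_div, div_le_div_iff₀ he0 (by norm_num : (0:ℝ) < 6)]; nlinarith
  -- pow/rpow conversions
  have hB3 : (X ^ ((1:ℝ)/3) / H ^ lam)^3 = X / H^(3*lam) := by
    rw [div_pow]
    congr 1
    · rw [← Real.rpow_natCast (X ^ ((1:ℝ)/3)) 3, ← Real.rpow_mul hX0.le]; norm_num
    · rw [← Real.rpow_natCast (H ^ lam) 3, ← Real.rpow_mul hH0.le]
      congr 1; ring
  have ht2 : t^2 = H^(3*lam) := by
    rw [ht, ← Real.rpow_natCast (H ^ (3*lam/2)) 2, ← Real.rpow_mul hH0.le]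
    congr 1; push_cast; ring
  have hHt : H * t = H ^ ((1:ℝ)+3*lam/2) := by
    rw [Real.rpow_add hH0, Real.rpow_one, ht]
  have hH2H3 : H^2 * H^(3*lam) = H^((2:ℝ)+3*lam) := by
    rw [Real.rpow_add hH0, ← Real.rpow_natCast H 2]; norm_num
  have hH3pos : (0:ℝ) < H^(3*lam) := Real.rpow_pos_of_pos hH0 _
  -- membership extraction
  have hmem : ∀ p : ℕ × ℕ, p ∈ S → 1 ≤ p.1 ∧ 1 ≤ p.2 ∧
      X ^ ((1:ℝ)/3)/H^lam < (p.2:ℝ) ∧ x < (p.1:ℝ)^2*(p.2:ℝ)^3 ∧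
      (p.1:ℝ)^2*(p.2:ℝ)^3 ≤ x + y := by
    intro p hp
    rw [hS, Finset.mem_filter, Finset.mem_product, Finset.mem_Icc, Finset.mem_Icc] at hp
    obtain ⟨⟨⟨h1, _⟩, ⟨h2, _⟩⟩, _, h3, h4, h5⟩ := hp
    push_cast at h4 h5
    exact ⟨h1, h2, h3, h4, h5⟩
  have hb3 : ∀ p : ℕ × ℕ, p ∈ S → X / H^(3*lam) < ((p.2:ℝ))^3 := by
    intro p hp
    obtain ⟨_, _, h3, _, _⟩ := hmem p hp
    have hB0 : 0 ≤ X ^ ((1:ℝ)/3) / H ^ lam := by positivity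
    have h := pow_lt_pow_left₀ h3 hB0 (by norm_num : 3 ≠ 0)
    rwa [hB3] at h
  -- per b, at most one a
  have key1 : ∀ p ∈ S, ∀ q ∈ S, p.2 = q.2 → q.1 ≤ p.1 := by
    intro p hp q hq hpq
    by_contra hcon
    push_neg at hcon
    obtain ⟨hp1, hp2, hpB, hplow, hpup⟩ := hmem p hp
    obtain ⟨hq1, hq2, hqB, hqlow, hqup⟩ := hmem q hq
    rw [← hpq] at hqlow hqup
    set β := Real.sqrt ((p.2:ℝ)^3) with hβ
    have hβ2 : β^2 = (p.2:ℝ)^3 := Real.sq_sqrt (by positivity)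
    have hβ0 : 0 ≤ β := Real.sqrt_nonneg _
    have hHβ : H < β := by
      refine lt_of_pow_lt_pow_left₀ 2 hβ0 ?_
      rw [hβ2]
      have h1 : X / H^(3*lam) < (p.2:ℝ)^3 := hb3 p hp
      have h2 : H^2 * H^(3*lam) ≤ X := by rw [hH2H3]; exact hH23X
      rw [div_lt_iff₀ hH3pos] at h1
      exact lt_of_mul_lt_mul_right (by linarith) hH3pos.le
    have hlow2 : Real.sqrt x < (p.1:ℝ) * β := by
      refine lt_of_pow_lt_pow_left₀ 2 (by positivity) ?_
      rw [Real.sq_sqrt hx0.le, mul_pow, hβ2]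
      exact hplow
    have hup2 : (q.1:ℝ) * β ≤ Real.sqrt x + H := by
      refine le_of_pow_le_pow_left₀ (by norm_num : (2:ℕ) ≠ 0) (by positivity) ?_
      rw [mul_pow, hβ2, ← hxy]
      exact hqup
    have hle : (p.1:ℝ) + 1 ≤ (q.1:ℝ) := by exact_mod_cast hcon
    have hmul := mul_le_mul_of_nonneg_right hle hβ0
    linarith
  -- per a, at most one b
  have hH16x : H ≤ x ^ ((1:ℝ)/6) :=
    hHX16.trans (Real.rpow_le_rpow hX0.le hxX (by norm_num))
  have hw3 : (x^((2:ℝ)/3))^3 = x^2 := by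
    rw [← Real.rpow_natCast (x ^ ((2:ℝ)/3)) 3, ← Real.rpow_mul hx0.le]; norm_num
  have hy3 : y ≤ 3 * x^((2:ℝ)/3) := by
    have h1 : Real.sqrt x * H ≤ x ^ ((2:ℝ)/3) := by
      calc Real.sqrt x * H ≤ Real.sqrt x * x^((1:ℝ)/6) :=
            mul_le_mul_of_nonneg_left hH16x hsx0.le
        _ = x^((1:ℝ)/2) * x^((1:ℝ)/6) := by rw [Real.sqrt_eq_rpow]
        _ = x^((1:ℝ)/2 + (1:ℝ)/6) := (Real.rpow_add hx0 _ _).symm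
        _ = x^((2:ℝ)/3) := by norm_num
    have h2 : H^2 ≤ x^((1:ℝ)/3) := by
      have h := pow_le_pow_left₀ hH0.le hH16x 2
      rwa [← Real.rpow_natCast (x ^ ((1:ℝ)/6)) 2, ← Real.rpow_mul hx0.le,
        show (1:ℝ)/6 * (2:ℕ) = (1:ℝ)/3 by push_cast; ring] at h
    have h3 : x^((1:ℝ)/3) ≤ x^((2:ℝ)/3) :=
      Real.rpow_le_rpow_of_exponent_le hx1.le (by norm_num)
    rw [hydef]; linarith
  have key2 : ∀ p ∈ S, ∀ q ∈ S, p.1 = q.1 → q.2 ≤ p.2 := by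
    intro p hp q hq hpq
    by_contra hcon
    push_neg at hcon
    obtain ⟨hp1, hp2, hpB, hplow, hpup⟩ := hmem p hp
    obtain ⟨hq1, hq2, hqB, hqlow, hqup⟩ := hmem q hq
    rw [← hpq] at hqlow hqup
    have hcast : ((p.2:ℝ)+1)^3 ≤ (q.2:ℝ)^3 := by
      have h := Nat.pow_le_pow_left (Nat.succ_le_of_lt hcon) 3
      exact_mod_cast h
    have hp1R : (1:ℝ) ≤ (p.1:ℝ) := by exact_mod_cast hp1
    have hb0 : (0:ℝ) ≤ (p.2:ℝ) := Nat.cast_nonneg _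
    have hw : x^((2:ℝ)/3) < (p.1:ℝ)^2 * (p.2:ℝ)^2 := by
      refine lt_of_pow_lt_pow_left₀ 3 (by positivity) ?_
      rw [hw3]
      have h1 : x^2 < ((p.1:ℝ)^2*(p.2:ℝ)^3)^2 :=
        pow_lt_pow_left₀ hplow hx0.le (by norm_num : 2 ≠ 0)
      have h2 : ((p.1:ℝ)^2*(p.2:ℝ)^3)^2 ≤ ((p.1:ℝ)^2*(p.2:ℝ)^2)^3 := by
        have hkey : (0:ℝ) ≤ ((p.1:ℝ)^2 - 1) * ((p.1:ℝ)^4 * (p.2:ℝ)^6) :=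
          mul_nonneg (by nlinarith [hp1R]) (by positivity)
        linarith [hkey]
      linarith
    have hmul : (p.1:ℝ)^2*((p.2:ℝ)+1)^3 ≤ (p.1:ℝ)^2*(q.2:ℝ)^3 :=
      mul_le_mul_of_nonneg_left hcast (sq_nonneg _)
    have hb1nn : (0:ℝ) ≤ (p.1:ℝ)^2*(p.2:ℝ) := mul_nonneg (sq_nonneg _) hb0
    have hb2nn : (0:ℝ) ≤ (p.1:ℝ)^2 := sq_nonneg _
    linarith [hmul, hw, hy3, hplow, hqup, hb1nn, hb2nn]
  -- case split
  -- case split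
  rcases le_or_gt X 5 with hX5 | hX5
  · -- small X : at most two values of b
    have hH6 : H^6 ≤ 5 := by
      have h1 := pow_le_pow_left₀ hH0.le hHX16 6
      rw [← Real.rpow_natCast (X ^ ((1:ℝ)/6)) 6, ← Real.rpow_mul hX0.le] at h1
      norm_num at h1
      linarith
    have hH2le : H^2 ≤ 2 := by
      refine le_of_pow_le_pow_left₀ (by norm_num : (3:ℕ) ≠ 0) (by norm_num) ?_
      calc (H^2)^3 = H^6 := by ring
        _ ≤ 5 := hH6
        _ ≤ 2^3 := by norm_num
    have hHle : H ≤ 3/2 := by nlinarith [hH2le, hH0]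
    have hsxle : Real.sqrt x ≤ 16/5 := by
      rw [show (16:ℝ)/5 = Real.sqrt ((16/5)^2) from (Real.sqrt_sq (by norm_num)).symm]
      exact Real.sqrt_le_sqrt (by nlinarith)
    have hxyle : x + y ≤ 26 := by
      rw [hydef]
      have hprod : (0:ℝ) ≤ (16/5 - Real.sqrt x) * (3/2 - H) :=
        mul_nonneg (by linarith) (by linarith)
      nlinarith [hprod, hsxle, hHle, hH2le, hx2X, hX5, hsx0]
    have hcard : S.card ≤ (Finset.Icc 1 2).card := by
      apply Finset.card_le_card_of_injOn Prod.snd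
      · intro p hp
        obtain ⟨hp1, hp2, _, hplow, hpup⟩ := hmem p hp
        have hp1R : (1:ℝ) ≤ (p.1:ℝ) := by exact_mod_cast hp1
        rw [Finset.mem_coe, Finset.mem_Icc]
        refine ⟨hp2, ?_⟩
        by_contra hcc
        push_neg at hcc
        have h3 : (3:ℝ) ≤ (p.2:ℝ) := by exact_mod_cast hcc
        have h27 : (27:ℝ) ≤ (p.2:ℝ)^3 := by
          calc (27:ℝ) = 3^3 := by norm_num
            _ ≤ (p.2:ℝ)^3 := pow_le_pow_left₀ (by norm_num) h3 3
        have hone : (1:ℝ) ≤ (p.1:ℝ)^2 := by nlinarith [hp1R]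
        have hb3le : ((p.2:ℝ))^3 ≤ 26 := by
          have h := mul_le_mul_of_nonneg_right hone
            (by positivity : (0:ℝ) ≤ (p.2:ℝ)^3)
          rw [one_mul] at h
          linarith [hpup, hxyle]
        linarith
      · intro p hp q hq h
        have h1 := key1 p (Finset.mem_coe.mp hp) q (Finset.mem_coe.mp hq) h
        have h2 := key1 q (Finset.mem_coe.mp hq) p (Finset.mem_coe.mp hp) h.symm
        exact Prod.ext (le_antisymm h2 h1) h
    have hle2 : (S.card : ℝ) ≤ 2 := by
      have h2 : (Finset.Icc 1 2).card = 2 := by simp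
      rw [h2] at hcard
      exact_mod_cast hcard
    linarith
  · -- large X
    have hsX0 : 0 < Real.sqrt X := Real.sqrt_pos.mpr hX0
    set A := (Real.sqrt x + H) * t / Real.sqrt X with hA
    clear_value A
    have hA0 : 0 < A := by rw [hA]; positivity
    have haA : ∀ p ∈ S, (p.1:ℝ) < A := by
      intro p hp
      obtain ⟨hp1, hp2, hpB, hplow, hpup⟩ := hmem p hp
      have hb3p := hb3 p hp
      have hp1R : (1:ℝ) ≤ (p.1:ℝ) := by exact_mod_cast hp1
      have h5 : (p.1:ℝ)^2 * (X / H^(3*lam)) < (Real.sqrt x + H)^2 := by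
        calc (p.1:ℝ)^2 * (X/H^(3*lam)) < (p.1:ℝ)^2 * (p.2:ℝ)^3 :=
              mul_lt_mul_of_pos_left hb3p (by nlinarith [hp1R])
          _ ≤ x + y := hpup
          _ = (Real.sqrt x + H)^2 := hxy
      refine lt_of_pow_lt_pow_left₀ 2 hA0.le ?_
      rw [hA, div_pow, mul_pow, ht2, Real.sq_sqrt hX0.le, lt_div_iff₀ hX0]
      rw [← mul_div_assoc, div_lt_iff₀ hH3pos] at h5
      linarith
    have hcard0 : S.card ≤ (Finset.Icc 1 ⌊A⌋₊).card := by
      apply Finset.card_le_card_of_injOn Prod.fst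
      · intro p hp
        obtain ⟨hp1, _, _, _, _⟩ := hmem p hp
        exact Finset.mem_Icc.mpr ⟨hp1, Nat.le_floor (haA p hp).le⟩
      · intro p hp q hq h
        have h1 := key2 p (Finset.mem_coe.mp hp) q (Finset.mem_coe.mp hq) h
        have h2 := key2 q (Finset.mem_coe.mp hq) p (Finset.mem_coe.mp hp) h.symm
        exact Prod.ext h (le_antisymm h2 h1)
    have hcard : S.card ≤ ⌊A⌋₊ := by simpa using hcard0
    have hcardR : (S.card:ℝ) ≤ A :=
      le_trans (by exact_mod_cast hcard) (Nat.floor_le hA0.le)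
    set v : ℝ := (5:ℝ)^((1:ℝ)/3) with hv
    clear_value v
    have hv0 : 0 < v := by rw [hv]; positivity
    have hv3 : v^3 = 5 := by
      rw [hv, ← Real.rpow_natCast ((5:ℝ) ^ ((1:ℝ)/3)) 3, ← Real.rpow_mul (by norm_num)]
      norm_num
    have hvX : v ≤ X^((1:ℝ)/3) := by
      rw [hv]
      exact Real.rpow_le_rpow (by norm_num) hX5.le (by norm_num)
    have hHtv : H * t * v ≤ Real.sqrt X := by
      calc H*t*v = H^((1:ℝ)+3*lam/2) * v := by rw [hHt]
        _ ≤ X^((1:ℝ)/6) * X^((1:ℝ)/3) :=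
            mul_le_mul hH136 hvX hv0.le (by positivity)
        _ = X^((1:ℝ)/6+(1:ℝ)/3) := (Real.rpow_add hX0 _ _).symm
        _ = X^((1:ℝ)/2) := by norm_num
        _ = Real.sqrt X := (Real.sqrt_eq_rpow X).symm
    have hsx2 : Real.sqrt x ≤ Real.sqrt 2 * Real.sqrt X := by
      rw [← Real.sqrt_mul (by norm_num) X]
      exact Real.sqrt_le_sqrt hx2X
    have hAle : A ≤ Real.sqrt 2 * t + 1/v := by
      rw [hA, div_le_iff₀ hsX0]
      have e1 : Real.sqrt x * t ≤ Real.sqrt 2 * Real.sqrt X * t :=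
        mul_le_mul_of_nonneg_right hsx2 ht0.le
      have e2 : H * t ≤ Real.sqrt X / v := by
        rw [le_div_iff₀ hv0]; exact hHtv
      have e3 : (Real.sqrt 2 * t + 1/v) * Real.sqrt X
          = Real.sqrt 2 * Real.sqrt X * t + Real.sqrt X / v := by
        field_simp
      rw [e3]
      have e4 : (Real.sqrt x + H) * t = Real.sqrt x * t + H * t := by ring
      rw [e4]
      linarith
    rcases le_or_gt S.card 1 with hc1 | hc2
    · have h1 : (S.card:ℝ) ≤ 1 := by exact_mod_cast hc1
      linarith
    · have hn2 : (2:ℝ) ≤ (S.card:ℝ) := by exact_mod_cast hc2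
      exact aux_final _ t v ht1 hv0 hv3 hn2 (hcardR.trans hAle)
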